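/- Unit loss bound: for every n ≥ 1, 0 ≤ L_{nΛξ} − L_{nΛμ} ≤ H_n + √(4 L_{nΛμ} H_n + H_n²), where H_n ≤ ln(1/w_μ) is the relative entropy between μ and ξ. -/

import Mathlib

set_option maxHeartbeats 1000000


open Finset Filter

/-- A probability distribution on finite binary strings:
nonnegative, `1` on the empty string, and additive under one-symbol extension. -/
def IsDistr (ρ : List Bool → ℝ) : Prop :=
  (∀ x, 0 ≤ ρ x) ∧ ρ [] = 1 ∧
    ∀ x, ρ x = ρ (x ++ [false]) + ρ (x ++ [true])

/-- Conditional probability `ρ(b | x) = ρ(xb)/ρ(x)` (junk `0` when `ρ x = 0`). -/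
noncomputable def condP (ρ : List Bool → ℝ) (x : List Bool) (b : Bool) : ℝ :=
  ρ (x ++ [b]) / ρ x

/-- Instantaneous relative entropy
`h_t(x) = ∑_b μ(b|x) ln (μ(b|x)/ξ(b|x))` (conventions `0·ln 0 = 0` are automatic
since `Real.log 0 = 0` and `r/0 = 0`). -/
noncomputable def instEnt (μ ξ : List Bool → ℝ) (x : List Bool) : ℝ :=
  ∑ b : Bool, condP μ x b * Real.log (condP μ x b / condP ξ x b)

/-- Total relative entropy `H_n = ∑_{t=1}^n ∑_{x_{<t}} μ(x_{<t}) h_t(x_{<t})`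
(histories of length `t-1`, i.e. length `t ∈ {0,…,n-1}`). -/
noncomputable def totalEnt (μ ξ : List Bool → ℝ) (n : ℕ) : ℝ :=
  ∑ t ∈ Finset.range n, ∑ x : Fin t → Bool,
    μ (List.ofFn x) * instEnt μ ξ (List.ofFn x)

/-- `ρ`-expected loss of predicting `y` after history `x`. -/
noncomputable def expLoss (ρ : List Bool → ℝ) (l : Bool → Bool → ℝ)
    (x : List Bool) (y : Bool) : ℝ :=
  ∑ b : Bool, condP ρ x b * l b y

/-- `Y` is a fixed choice of minimizers for the scheme `Λ_ρ`. -/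
def IsPredictor (ρ : List Bool → ℝ) (l : Bool → Bool → ℝ)
    (Y : List Bool → Bool) : Prop :=
  ∀ x y, expLoss ρ l x (Y x) ≤ expLoss ρ l x y

/-- Total `μ`-expected loss `L_{nΛ}` of the scheme with minimizers `Y`. -/
noncomputable def totalLoss (μ : List Bool → ℝ) (l : Bool → Bool → ℝ)
    (Y : List Bool → Bool) (n : ℕ) : ℝ :=
  ∑ t ∈ Finset.range n, ∑ x : Fin t → Bool,
    μ (List.ofFn x) * expLoss μ l (List.ofFn x) (Y (List.ofFn x))


open Real

section ScalarLemmas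


lemma contOn_log_sub (q p : ℝ) (hq0 : 0 < q) : ContinuousOn (fun x : ℝ => Real.log x) (Set.Icc q p) :=
  Real.continuousOn_log.mono (by
    intro y hy; simp only [Set.mem_Icc] at hy
    simp only [Set.mem_compl_iff, Set.mem_singleton_iff]
    intro h; rw [h] at hy; linarith [hy.1])

lemma klLower (q p K : ℝ) (hq0 : 0 < q) (hq1 : q < 1) (hqp : q ≤ p) (hp1 : p ≤ 1)
    (hK : 0 < K) (hbd : ∀ x, q ≤ x → x ≤ p → x * (1 - x) ≤ K) :
    (p - q)^2 / (2*K) ≤ p * Real.log (p/q) + (1-p) * Real.log ((1-p)/(1-q)) := by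
  set φ : ℝ → ℝ := fun x => Real.log x - Real.log q - Real.log (1-x) + Real.log (1-q) - (x-q)/K with hφdef
  set f : ℝ → ℝ := fun x => x * Real.log x - x * Real.log q +
      ((1-x) * Real.log (1-x) - (1-x) * Real.log (1-q)) - (x-q)^2/(2*K) with hfdef
  have hφq : φ q = 0 := by simp [hφdef]
  have hφd : ∀ y ∈ Set.Ioo (0:ℝ) 1, HasDerivAt φ (1/y + 1/(1-y) - 1/K) y := by
    intro y hy
    have h1 : HasDerivAt (fun x : ℝ => Real.log x) (1/y) y := by
      simpa [one_div] using Real.hasDerivAt_log (ne_of_gt hy.1)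
    have h2 : HasDerivAt (fun x : ℝ => (1:ℝ) - x) (-1) y := by
      simpa using ((hasDerivAt_id y).const_sub 1)
    have h3 : HasDerivAt (fun x : ℝ => Real.log (1-x)) (-1/(1-y)) y := by
      have := (Real.hasDerivAt_log (x := 1-y) (by linarith [hy.2])).comp y h2
      simpa [div_eq_mul_inv, mul_comm, Function.comp_def] using this
    have h4 : HasDerivAt (fun x : ℝ => (x-q)/K) (1/K) y := by
      have : HasDerivAt (fun x : ℝ => x - q) 1 y := (hasDerivAt_id y).sub_const q
      simpa [div_eq_mul_inv] using this.div_const K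
    have := (((h1.sub_const (Real.log q)).sub h3).add_const (Real.log (1-q))).sub h4
    refine this.congr_deriv ?_
    ring
  have hφnonneg : ∀ x, q ≤ x → x ≤ p → x < 1 → 0 ≤ φ x := by
    intro x hqx hxp hx1
    have hmono : MonotoneOn φ (Set.Icc q x) := by
      apply monotoneOn_of_deriv_nonneg (convex_Icc q x)
      · have c1 : ContinuousOn (fun y : ℝ => Real.log y) (Set.Icc q x) := contOn_log_sub q x hq0
        have c2 : ContinuousOn (fun y : ℝ => Real.log (1-y)) (Set.Icc q x) := by
          apply Real.continuousOn_log.comp (Continuous.continuousOn (by fun_prop))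
          intro y hy; simp only [Set.mem_Icc] at hy
          simp only [Set.mem_compl_iff, Set.mem_singleton_iff, Set.mem_preimage]
          intro h
          have : y = 1 := by linarith
          rw [this] at hy; linarith [hy.2]
        exact ((((c1.sub continuousOn_const).sub c2).add continuousOn_const).sub
          (Continuous.continuousOn (by fun_prop)))
      · intro y hy
        rw [interior_Icc] at hy
        exact ((hφd y ⟨lt_of_lt_of_le hq0 hy.1.le, lt_of_le_of_lt hy.2.le hx1⟩)).differentiableAt.differentiableWithinAt
      · intro y hy
        rw [interior_Icc] at hy
        have hy01 : y ∈ Set.Ioo (0:ℝ) 1 := ⟨lt_of_lt_of_le hq0 hy.1.le, lt_of_le_of_lt hy.2.le hx1⟩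
        rw [(hφd y hy01).deriv]
        have hyK : y * (1-y) ≤ K := hbd y hy.1.le (le_trans hy.2.le hxp)
        have hy0 : 0 < y := hy01.1
        have hy1' : 0 < 1 - y := by linarith [hy01.2]
        have h5 : 1/y + 1/(1-y) = 1/(y*(1-y)) := by field_simp; ring
        rw [h5]
        have := one_div_le_one_div_of_le (mul_pos hy0 hy1') hyK
        linarith
    have := hmono (Set.left_mem_Icc.2 hqx) (Set.right_mem_Icc.2 hqx) hqx
    rw [hφq] at this; exact this
  have hfmono : MonotoneOn f (Set.Icc q p) := by
    apply monotoneOn_of_deriv_nonneg (convex_Icc q p)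
    · have hc1 : Continuous fun x : ℝ => (1-x) * Real.log (1-x) := by
        have hsub : Continuous (fun x : ℝ => (1:ℝ) - x) := by fun_prop
        have hcomp := Real.continuous_negMulLog.comp hsub
        have h2 : (fun x : ℝ => (1-x) * Real.log (1-x)) = fun x => -(Real.negMulLog ((1:ℝ)-x)) := by
          funext x; simp [Real.negMulLog]; ring
        rw [h2]; exact hcomp.neg
      have hc2 : ContinuousOn (fun x : ℝ => x * Real.log x) (Set.Icc q p) :=
        ContinuousOn.mul continuousOn_id (contOn_log_sub q p hq0)
      exact (((hc2.sub (Continuous.continuousOn (by fun_prop))).add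
        (hc1.continuousOn.sub (Continuous.continuousOn (by fun_prop)))).sub
        (Continuous.continuousOn (by fun_prop)))
    · intro y hy
      rw [interior_Icc] at hy
      have hy0 : (0:ℝ) < y := lt_of_lt_of_le hq0 hy.1.le
      have hy1 : y < 1 := lt_of_lt_of_le hy.2 hp1
      have h1 := Real.hasDerivAt_mul_log (ne_of_gt hy0)
      have h2 : HasDerivAt (fun x : ℝ => (1:ℝ) - x) (-1) y := by
        simpa using ((hasDerivAt_id y).const_sub 1)
      have h3 : HasDerivAt (fun x : ℝ => (1-x) * Real.log (1-x)) (-(Real.log (1-y) + 1)) y := by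
        have := (Real.hasDerivAt_mul_log (x := 1-y) (by linarith)).comp y h2
        simpa [Function.comp_def] using this
      apply DifferentiableAt.differentiableWithinAt
      exact (((h1.differentiableAt.sub (by fun_prop)).add
        (h3.differentiableAt.sub (by fun_prop))).sub (by fun_prop))
    · intro y hy
      rw [interior_Icc] at hy
      have hy0 : (0:ℝ) < y := lt_of_lt_of_le hq0 hy.1.le
      have hy1 : y < 1 := lt_of_lt_of_le hy.2 hp1
      have h1 : HasDerivAt (fun x : ℝ => x * Real.log x) (Real.log y + 1) y :=
        Real.hasDerivAt_mul_log (ne_of_gt hy0)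
      have h2 : HasDerivAt (fun x : ℝ => (1:ℝ) - x) (-1) y := by
        simpa using ((hasDerivAt_id y).const_sub 1)
      have h3 : HasDerivAt (fun x : ℝ => (1-x) * Real.log (1-x)) (-(Real.log (1-y) + 1)) y := by
        have := (Real.hasDerivAt_mul_log (x := 1-y) (by linarith)).comp y h2
        simpa [Function.comp_def] using this
      have h4 : HasDerivAt (fun x : ℝ => x * Real.log q) (Real.log q) y := by
        simpa using (hasDerivAt_id y).mul_const (Real.log q)
      have h5 : HasDerivAt (fun x : ℝ => (1-x) * Real.log (1-q)) (-Real.log (1-q)) y := by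
        simpa using h2.mul_const (Real.log (1-q))
      have h6 : HasDerivAt (fun x : ℝ => (x-q)^2/(2*K)) ((y-q)/K) y := by
        have hp : HasDerivAt (fun x : ℝ => (x-q)^2) (2*(y-q)) y := by
          simpa [Pi.pow_def] using (((hasDerivAt_id y).sub_const q).pow 2)
        have := hp.div_const (2*K)
        refine this.congr_deriv ?_
        field_simp
      have hd : HasDerivAt f (φ y) y := by
        have := (((h1.sub h4).add (h3.sub h5)).sub h6)
        refine this.congr_deriv ?_
        simp [hφdef]; ring
      rw [hd.deriv]
      exact hφnonneg y hy.1.le hy.2.le hy1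
  have hfq : f q = 0 := by simp [hfdef]
  have hfp := hfmono (Set.left_mem_Icc.2 hqp) (Set.right_mem_Icc.2 hqp) hqp
  rw [hfq] at hfp
  have hp0 : 0 < p := lt_of_lt_of_le hq0 hqp
  have e1 : p * Real.log (p/q) = p * Real.log p - p * Real.log q := by
    rw [Real.log_div (ne_of_gt hp0) (ne_of_gt hq0)]; ring
  rcases eq_or_lt_of_le hp1 with h|h
  · subst h
    rw [hfdef] at hfp
    simp only [sub_self, zero_mul, Real.log_one, mul_one, mul_zero, zero_sub, sub_zero, mul_zero] at hfp
    rw [e1]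
    simp only [Real.log_one, sub_self, zero_mul, mul_one]
    linarith
  · have e2 : (1-p) * Real.log ((1-p)/(1-q)) = (1-p) * Real.log (1-p) - (1-p) * Real.log (1-q) := by
      rw [Real.log_div (by linarith) (by linarith)]; ring
    rw [e1, e2]
    rw [hfdef] at hfp
    simp only at hfp
    linarith



lemma chainLemma (r c s t d K m : ℝ) (hr : 0 < r) (ht : 0 ≤ t) (hs : 0 ≤ s)
    (hK : 0 < K) (hKcm : K ≤ c*m) (hmt : m*t ≤ r) (hcs : c*t ≤ r*s)
    (hd : r^2/(2*K) ≤ d) (hc : 0 ≤ c) : t^2 ≤ 2*d*s := by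
  have h2 : c*m*t^2 ≤ c*t*r := by nlinarith [mul_nonneg hc ht]
  have h4 : K*t^2 ≤ r^2*s := by nlinarith [sq_nonneg t, mul_nonneg hr.le hs]
  have h5 : r^2/(2*K) * s ≤ d * s := mul_le_mul_of_nonneg_right hd hs
  have h6 : r^2/(2*K)*s = r^2*s/(2*K) := by ring
  have h7 : K*t^2 ≤ 2*K*(d*s) := by
    rw [h6] at h5
    rw [div_le_iff₀ (by linarith)] at h5
    nlinarith
  nlinarith

lemma stepPos (p q A B : ℝ) (hq : 0 < q) (hqp : q < p) (hp1 : p ≤ 1)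
    (hA0 : 0 ≤ A) (hA1 : A ≤ 1) (hB0 : 0 ≤ B) (hB1 : B ≤ 1)
    (hz : q*B ≤ (1-q)*A) (ht : 0 ≤ p*B - (1-p)*A) :
    (p*B - (1-p)*A)^2 ≤
      2*(p*Real.log (p/q)+(1-p)*Real.log ((1-p)/(1-q)))*(p*B + (1-p)*A) := by
  have hq1 : q < 1 := lt_of_lt_of_le hqp hp1
  have hp0 : 0 < p := lt_trans hq hqp
  have hg : 0 ≤ (1-q)*A - q*B := by linarith
  have hcpos : 0 < p + q - 2*p*q := by nlinarith
  have hF1 : q*(p*B - (1-p)*A) ≤ (p-q)*A := by nlinarith [mul_nonneg hp0.le hg]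
  have hF2 : (1-q)*(p*B - (1-p)*A) ≤ (p-q)*B := by
    nlinarith [mul_nonneg (by linarith : (0:ℝ) ≤ 1-p) hg]
  have hF3 : (p+q-2*p*q)*(p*B - (1-p)*A) ≤ (p-q)*(p*B + (1-p)*A) := by
    nlinarith [mul_nonneg (mul_nonneg hp0.le (by linarith : (0:ℝ) ≤ 1-p)) hg]
  have hs0 : 0 ≤ p*B + (1-p)*A :=
    add_nonneg (mul_nonneg hp0.le hB0) (mul_nonneg (by linarith) hA0)
  have hrpos : 0 < p - q := by linarith
  have hqt : q*(p*B - (1-p)*A) ≤ p - q :=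
    le_trans hF1 (by nlinarith)
  have hq1t : (1-q)*(p*B - (1-p)*A) ≤ p - q :=
    le_trans hF2 (by nlinarith)
  rcases le_or_gt (1/2 : ℝ) q with hhalf | hhalf
  · have hK : (0:ℝ) < q*(1-q) := by nlinarith
    have hbd : ∀ x, q ≤ x → x ≤ p → x*(1-x) ≤ q*(1-q) := by
      intro x h1 h2
      nlinarith [mul_nonneg (by linarith : (0:ℝ) ≤ x - q) (by linarith : (0:ℝ) ≤ x + q - 1)]
    have hdlow := klLower q p (q*(1-q)) hq hq1 hqp.le hp1 hK hbd
    have hKcm : q*(1-q) ≤ (p+q-2*p*q)*q := by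
      nlinarith [mul_nonneg (by linarith : (0:ℝ) ≤ 2*q - 1) (by linarith : (0:ℝ) ≤ 1 - p)]
    exact chainLemma (p-q) (p+q-2*p*q) (p*B + (1-p)*A) (p*B - (1-p)*A) _ (q*(1-q)) q
      hrpos ht hs0 hK hKcm hqt hF3 hdlow hcpos.le
  · rcases le_or_gt p (1/2 : ℝ) with hph | hph
    · have hK : (0:ℝ) < p*(1-p) := by nlinarith
      have hbd : ∀ x, q ≤ x → x ≤ p → x*(1-x) ≤ p*(1-p) := by
        intro x h1 h2
        nlinarith [mul_nonneg (by linarith : (0:ℝ) ≤ p - x) (by linarith : (0:ℝ) ≤ 1 - x - p)]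
      have hdlow := klLower q p (p*(1-p)) hq hq1 hqp.le hp1 hK hbd
      have hKcm : p*(1-p) ≤ (p+q-2*p*q)*(1-q) := by
        nlinarith [mul_nonneg (mul_nonneg (by linarith : (0:ℝ) ≤ 1-p) hq.le) (by linarith : (0:ℝ) ≤ 1-p-q),
          mul_nonneg (mul_nonneg hp0.le (by linarith : (0:ℝ) ≤ p-q)) (by linarith : (0:ℝ) ≤ 1-q)]
      exact chainLemma (p-q) (p+q-2*p*q) (p*B + (1-p)*A) (p*B - (1-p)*A) _ (p*(1-p)) (1-q)
        hrpos ht hs0 hK hKcm hq1t hF3 hdlow hcpos.le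
    · have hK : (0:ℝ) < (1/4 : ℝ) := by norm_num
      have hbd : ∀ x, q ≤ x → x ≤ p → x*(1-x) ≤ (1/4:ℝ) := by
        intro x h1 h2; nlinarith [sq_nonneg (x - 1/2)]
      have hdlow := klLower q p (1/4) hq hq1 hqp.le hp1 hK hbd
      have hc2 : (1/2:ℝ) ≤ p+q-2*p*q := by
        nlinarith [mul_nonneg (by linarith : (0:ℝ) ≤ 1-2*q) (by linarith : (0:ℝ) ≤ 2*p-1)]
      have hKcm : (1/4:ℝ) ≤ (p+q-2*p*q)*(1-q) := by
        have h8 := mul_le_mul_of_nonneg_right hc2 (by linarith : (0:ℝ) ≤ 1-q)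
        nlinarith
      exact chainLemma (p-q) (p+q-2*p*q) (p*B + (1-p)*A) (p*B - (1-p)*A) _ (1/4) (1-q)
        hrpos ht hs0 hK hKcm hq1t hF3 hdlow hcpos.le

lemma klPosLt (q p : ℝ) (hq : 0 < q) (hqp : q < p) (hp1 : p ≤ 1) :
    0 ≤ p * Real.log (p/q) + (1-p) * Real.log ((1-p)/(1-q)) := by
  have h := klLower q p (1/4) hq (lt_of_lt_of_le hqp hp1) hqp.le hp1 (by norm_num)
    (fun x h1 h2 => by nlinarith [sq_nonneg (x - 1/2)])
  have : (0:ℝ) ≤ (p-q)^2/(2*(1/4)) := by positivity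
  linarith

lemma klEq (p : ℝ) : p * Real.log (p/p) + (1-p) * Real.log ((1-p)/(1-p)) = 0 := by
  rcases eq_or_ne p 0 with h|h
  · simp [h]
  · rcases eq_or_ne p 1 with h1|h1
    · simp [h1]
    · rw [div_self h, div_self (by intro hc; apply h1; linarith [sub_eq_zero.mp hc] : (1:ℝ)-p ≠ 0)]
      simp

lemma klNonneg (p q : ℝ) (hp0 : 0 ≤ p) (hp1 : p ≤ 1) (hq0 : 0 ≤ q) (hq1 : q ≤ 1)
    (hd0 : q = 0 → p = 0) (hd1 : q = 1 → p = 1) :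
    0 ≤ p * Real.log (p/q) + (1-p) * Real.log ((1-p)/(1-q)) := by
  rcases lt_trichotomy p q with h|h|h
  · have hq1' : q < 1 := by
      rcases eq_or_lt_of_le hq1 with h1|h1
      · exact absurd (hd1 h1) (by linarith [h1 ▸ h])
      · exact h1
    have hkey := klPosLt (1-q) (1-p) (by linarith) (by linarith) (by linarith)
    simp only [show (1:ℝ)-(1-p) = p from by ring, show (1:ℝ)-(1-q) = q from by ring] at hkey
    linarith
  · rw [h, klEq]
  · have hqz : 0 < q := by
      rcases eq_or_lt_of_le hq0 with h0|h0
      · exact absurd (hd0 h0.symm) (by linarith [h0 ▸ h])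
      · exact h0
    exact klPosLt q p hqz h hp1
lemma stepMain (p q α β : ℝ) (hp0 : 0 ≤ p) (hp1 : p ≤ 1) (hq0 : 0 ≤ q) (hq1 : q ≤ 1)
    (hd0 : q = 0 → p = 0) (hd1 : q = 1 → p = 1)
    (hαl : -1 ≤ α) (hαu : α ≤ 1) (hβl : -1 ≤ β) (hβu : β ≤ 1)
    (hz : (1-q)*α + q*β ≤ 0) (ht : 0 ≤ (1-p)*α + p*β) :
    ((1-p)*α + p*β)^2 ≤
      2*(p*Real.log (p/q)+(1-p)*Real.log ((1-p)/(1-q)))*((1-p)*|α| + p*|β|) := by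
  have habs : ∀ x : ℝ, -1 ≤ x → x ≤ 1 → |x| ≤ 1 := fun x h1 h2 => abs_le.2 ⟨h1, h2⟩
  rcases lt_trichotomy p q with h|h|h
  · -- p < q : symmetric case
    have hq1' : q < 1 := by
      rcases eq_or_lt_of_le hq1 with h1|h1
      · exact absurd (hd1 h1) (by linarith [h1 ▸ h])
      · exact h1
    -- sign analysis: β ≤ 0 ≤ α
    have hkey : 0 ≤ (q-p)*(α-β) := by nlinarith
    have hβα : β ≤ α := by
      by_contra hcon
      push_neg at hcon
      nlinarith [mul_pos (show (0:ℝ) < q-p by linarith) (show (0:ℝ) < β-α by linarith)]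
    have hβneg : β ≤ 0 := by
      by_contra hcon
      push_neg at hcon
      nlinarith [mul_pos (show (0:ℝ) < q by linarith) (show (0:ℝ) < β by linarith),
        mul_nonneg (show (0:ℝ) ≤ 1-q by linarith) (show (0:ℝ) ≤ α by linarith)]
    have hαpos : 0 ≤ α := by
      by_contra hcon
      push_neg at hcon
      nlinarith [mul_pos (show (0:ℝ) < 1-p by linarith) (show (0:ℝ) < -α by linarith),
        mul_nonneg hp0 (show (0:ℝ) ≤ -β by linarith)]
    rw [abs_of_nonneg hαpos, abs_of_nonpos hβneg]
    have hstep := stepPos (1-p) (1-q) (-β) α (by linarith) (by linarith) (by linarith)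
      (by linarith) (by linarith) (by linarith) (by linarith)
      (by nlinarith) (by nlinarith)
    simp only [show (1:ℝ)-(1-p) = p from by ring, show (1:ℝ)-(1-q) = q from by ring] at hstep
    nlinarith [hstep]
  · -- p = q
    have h0 : (1-p)*α + p*β = 0 := by
      apply le_antisymm _ ht
      rw [h]; exact hz
    rw [h0]
    have hd := klNonneg p q hp0 hp1 hq0 hq1 hd0 hd1
    have hs : 0 ≤ (1-p)*|α| + p*|β| :=
      add_nonneg (mul_nonneg (by linarith) (abs_nonneg _)) (mul_nonneg hp0 (abs_nonneg _))
    nlinarith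
  · -- q < p
    have hqz : 0 < q := by
      rcases eq_or_lt_of_le hq0 with h0|h0
      · exact absurd (hd0 h0.symm) (by linarith [h0 ▸ h])
      · exact h0
    have hkey : 0 ≤ (p-q)*(β-α) := by nlinarith
    have hαβ : α ≤ β := by
      by_contra hcon
      push_neg at hcon
      nlinarith [mul_pos (show (0:ℝ) < p-q by linarith) (show (0:ℝ) < α-β by linarith)]
    have hαneg : α ≤ 0 := by
      by_contra hcon
      push_neg at hcon
      nlinarith [mul_pos hqz (show (0:ℝ) < β by linarith),
        mul_nonneg (show (0:ℝ) ≤ 1-q by linarith) (show (0:ℝ) ≤ α by linarith)]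
    have hβpos : 0 ≤ β := by
      by_contra hcon
      push_neg at hcon
      nlinarith [mul_pos (show (0:ℝ) < p by linarith) (show (0:ℝ) < -β by linarith),
        mul_nonneg (show (0:ℝ) ≤ 1-p by linarith) (show (0:ℝ) ≤ -α by linarith)]
    rw [abs_of_nonpos hαneg, abs_of_nonneg hβpos]
    have hstep := stepPos p q (-α) β hqz h hp1 (by linarith) (by linarith) (by linarith)
      (by linarith) (by nlinarith) (by nlinarith)
    nlinarith [hstep]

end ScalarLemmas

section SumLemmas


def snocEquiv (t : ℕ) : ((Fin t → Bool) × Bool) ≃ (Fin (t+1) → Bool) where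
  toFun p := Fin.snoc p.1 p.2
  invFun y := (fun i => y i.castSucc, y (Fin.last t))
  left_inv p := by
    ext i
    · simp [Fin.snoc_castSucc]
    · simp [Fin.snoc_last]
  right_inv y := by
    funext i
    refine Fin.lastCases ?_ ?_ i
    · simp [Fin.snoc_last]
    · intro j; simp [Fin.snoc_castSucc]

lemma ofFn_snoc (t : ℕ) (x : Fin t → Bool) (b : Bool) :
    List.ofFn (Fin.snoc x b) = List.ofFn x ++ [b] := by
  rw [List.ofFn_succ']
  simp [Fin.snoc_castSucc, Fin.snoc_last]

lemma sum_snoc (t : ℕ) (G : List Bool → ℝ) :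
    ∑ y : Fin (t+1) → Bool, G (List.ofFn y) =
      ∑ x : Fin t → Bool, ∑ b : Bool, G (List.ofFn x ++ [b]) := by
  calc ∑ y : Fin (t+1) → Bool, G (List.ofFn y)
      = ∑ p : (Fin t → Bool) × Bool, G (List.ofFn p.1 ++ [p.2]) := by
        refine (Fintype.sum_equiv (snocEquiv t) (fun p => G (List.ofFn p.1 ++ [p.2]))
          (fun y => G (List.ofFn y)) ?_).symm
        intro p
        show G (List.ofFn p.1 ++ [p.2]) = G (List.ofFn (Fin.snoc p.1 p.2))
        rw [ofFn_snoc]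
    _ = ∑ x : Fin t → Bool, ∑ b : Bool, G (List.ofFn x ++ [b]) :=
        Fintype.sum_prod_type (f := fun p : (Fin t → Bool) × Bool => G (List.ofFn p.1 ++ [p.2]))

section Hist
variable (μ ξ : List Bool → ℝ) (l : Bool → Bool → ℝ)
variable (hμ0 : ∀ x, 0 ≤ μ x) (hμa : ∀ x, μ x = μ (x ++ [false]) + μ (x ++ [true]))
variable (hξ0 : ∀ x, 0 ≤ ξ x) (hξa : ∀ x, ξ x = ξ (x ++ [false]) + ξ (x ++ [true]))
variable (hdom : ∀ y, ξ y = 0 → μ y = 0)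
variable (hl : ∀ a y, 0 ≤ l a y ∧ l a y ≤ 1)

include hμ0 hμa hξ0 hξa hdom in
lemma instEnt_structure (x : List Bool) (hμx : 0 < μ x) :
    ∃ p q : ℝ, 0 ≤ p ∧ p ≤ 1 ∧ 0 ≤ q ∧ q ≤ 1 ∧ (q = 0 → p = 0) ∧ (q = 1 → p = 1) ∧
      condP μ x true = p ∧ condP μ x false = 1 - p ∧
      condP ξ x true = q ∧ condP ξ x false = 1 - q ∧
      instEnt μ ξ x = p * Real.log (p/q) + (1-p) * Real.log ((1-p)/(1-q)) := by
  have hξx : 0 < ξ x := by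
    rcases eq_or_lt_of_le (hξ0 x) with h|h
    · exact absurd (hdom x h.symm) (ne_of_gt hμx)
    · exact h
  refine ⟨condP μ x true, condP ξ x true, ?_, ?_, ?_, ?_, ?_, ?_, rfl, ?_, rfl, ?_, ?_⟩
  · exact div_nonneg (hμ0 _) (hμ0 _)
  · rw [condP, div_le_one hμx]; nlinarith [hμa x, hμ0 (x ++ [false])]
  · exact div_nonneg (hξ0 _) (hξ0 _)
  · rw [condP, div_le_one hξx]; nlinarith [hξa x, hξ0 (x ++ [false])]
  · intro hq
    rw [condP, div_eq_zero_iff] at hq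
    rcases hq with hq|hq
    · rw [condP, hdom _ hq, zero_div]
    · exact absurd hq (ne_of_gt hξx)
  · intro hq
    rw [condP, div_eq_one_iff_eq (ne_of_gt hξx)] at hq
    have hf : ξ (x ++ [false]) = 0 := by linarith [hξa x]
    rw [condP, div_eq_one_iff_eq (ne_of_gt hμx)]
    linarith [hμa x, hdom _ hf]
  · rw [condP, condP, eq_sub_iff_add_eq, ← add_div, div_eq_one_iff_eq (ne_of_gt hμx)]
    linarith [hμa x]
  · rw [condP, condP, eq_sub_iff_add_eq, ← add_div, div_eq_one_iff_eq (ne_of_gt hξx)]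
    linarith [hξa x]
  · rw [instEnt, Fintype.sum_bool]
    have e1 : condP μ x false = 1 - condP μ x true := by
      rw [condP, condP, eq_sub_iff_add_eq, ← add_div, div_eq_one_iff_eq (ne_of_gt hμx)]
      linarith [hμa x]
    have e2 : condP ξ x false = 1 - condP ξ x true := by
      rw [condP, condP, eq_sub_iff_add_eq, ← add_div, div_eq_one_iff_eq (ne_of_gt hξx)]
      linarith [hξa x]
    rw [e1, e2]

include hμ0 hμa hξ0 hξa hdom in
lemma instEnt_nonneg (x : List Bool) : 0 ≤ instEnt μ ξ x := by
  by_cases hμx : μ x = 0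
  · rw [instEnt]
    simp [condP, hμx]
  · obtain ⟨p, q, h1, h2, h3, h4, h5, h6, _, _, _, _, hE⟩ :=
      instEnt_structure μ ξ hμ0 hμa hξ0 hξa hdom x (lt_of_le_of_ne (hμ0 x) (Ne.symm hμx))
    rw [hE]
    exact klNonneg p q h1 h2 h3 h4 h5 h6

include hμ0 hμa hξ0 hξa hdom hl in
lemma step_hist (x : List Bool) (yξ yμ : Bool)
    (hopt : expLoss ξ l x yξ ≤ expLoss ξ l x yμ) :
    expLoss μ l x yξ - expLoss μ l x yμ ≤
      Real.sqrt (2 * instEnt μ ξ x * (expLoss μ l x yξ + expLoss μ l x yμ)) := by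
  by_cases hμx : μ x = 0
  · have h0 : ∀ y, expLoss μ l x y = 0 := by
      intro y; rw [expLoss]; simp [condP, hμx]
    rw [h0, h0]
    simpa using Real.sqrt_nonneg _
  · have hμxpos : 0 < μ x := lt_of_le_of_ne (hμ0 x) (Ne.symm hμx)
    obtain ⟨p, q, h1, h2, h3, h4, h5, h6, hμt, hμf, hξt, hξf, hE⟩ :=
      instEnt_structure μ ξ hμ0 hμa hξ0 hξa hdom x hμxpos
    have hexpμ : ∀ y, expLoss μ l x y = (1-p) * l false y + p * l true y := by
      intro y; rw [expLoss, Fintype.sum_bool, hμt, hμf]; ring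
    have hexpξ : ∀ y, expLoss ξ l x y = (1-q) * l false y + q * l true y := by
      intro y; rw [expLoss, Fintype.sum_bool, hξt, hξf]; ring
    set α := l false yξ - l false yμ with hα
    set β := l true yξ - l true yμ with hβ
    rcases le_or_gt (expLoss μ l x yξ - expLoss μ l x yμ) 0 with hΔ|hΔ
    · exact le_trans hΔ (Real.sqrt_nonneg _)
    · have hΔeq : expLoss μ l x yξ - expLoss μ l x yμ = (1-p)*α + p*β := by
        rw [hexpμ, hexpμ, hα, hβ]; ring
      have hz : (1-q)*α + q*β ≤ 0 := by
        have := hopt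
        rw [hexpξ, hexpξ] at this
        rw [hα, hβ]; linarith
      have hstep := stepMain p q α β h1 h2 h3 h4 h5 h6
        (by rw [hα]; linarith [(hl false yξ).1, (hl false yμ).2])
        (by rw [hα]; linarith [(hl false yξ).2, (hl false yμ).1])
        (by rw [hβ]; linarith [(hl true yξ).1, (hl true yμ).2])
        (by rw [hβ]; linarith [(hl true yξ).2, (hl true yμ).1])
        hz (by rw [← hΔeq]; linarith)
      have hd0 := klNonneg p q h1 h2 h3 h4 h5 h6
      have hS : (1-p)*|α| + p*|β| ≤ expLoss μ l x yξ + expLoss μ l x yμ := by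
        have ha : |α| ≤ l false yξ + l false yμ := by
          rw [hα]; rw [abs_le]
          constructor <;> [linarith [(hl false yξ).1, (hl false yμ).1];
            linarith [(hl false yξ).1, (hl false yμ).1]]
        have hb : |β| ≤ l true yξ + l true yμ := by
          rw [hβ]; rw [abs_le]
          constructor <;> [linarith [(hl true yξ).1, (hl true yμ).1];
            linarith [(hl true yξ).1, (hl true yμ).1]]
        rw [hexpμ, hexpμ]
        have := mul_le_mul_of_nonneg_left ha (by linarith : (0:ℝ) ≤ 1-p)
        have := mul_le_mul_of_nonneg_left hb h1
        linarith
      have hkey : (expLoss μ l x yξ - expLoss μ l x yμ)^2 ≤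
          2 * instEnt μ ξ x * (expLoss μ l x yξ + expLoss μ l x yμ) := by
        rw [hΔeq, hE]
        calc ((1-p)*α + p*β)^2 ≤
            2*(p*Real.log (p/q)+(1-p)*Real.log ((1-p)/(1-q)))*((1-p)*|α| + p*|β|) := hstep
          _ ≤ 2*(p*Real.log (p/q)+(1-p)*Real.log ((1-p)/(1-q)))*
              (expLoss μ l x yξ + expLoss μ l x yμ) :=
            mul_le_mul_of_nonneg_left hS (by linarith [hd0])
      calc expLoss μ l x yξ - expLoss μ l x yμ
          = Real.sqrt ((expLoss μ l x yξ - expLoss μ l x yμ)^2) := by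
            rw [Real.sqrt_sq hΔ.le]
        _ ≤ _ := Real.sqrt_le_sqrt hkey

end Hist



section Tel

lemma ent_term (μ ξ : List Bool → ℝ) (hμ0 : ∀ x, 0 ≤ μ x)
    (hμa : ∀ x, μ x = μ (x ++ [false]) + μ (x ++ [true]))
    (hξ0 : ∀ x, 0 ≤ ξ x) (hdom : ∀ y, ξ y = 0 → μ y = 0)
    (x : List Bool) (b : Bool) :
    μ x * (condP μ x b * Real.log (condP μ x b / condP ξ x b)) =
      μ (x ++ [b]) * Real.log (μ (x ++ [b]) / ξ (x ++ [b])) -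
        μ (x ++ [b]) * Real.log (μ x / ξ x) := by
  by_cases hμx : μ x = 0
  · have hb : μ (x ++ [b]) = 0 := by
      have h := hμa x
      have h1 := hμ0 (x ++ [false]); have h2 := hμ0 (x ++ [true])
      cases b
      · linarith
      · linarith
    rw [hμx, hb]; ring
  · by_cases hμb : μ (x ++ [b]) = 0
    · rw [hμb]
      simp [condP, hμb]
    · have hμxp : 0 < μ x := lt_of_le_of_ne (hμ0 x) (Ne.symm hμx)
      have hμbp : 0 < μ (x ++ [b]) := lt_of_le_of_ne (hμ0 _) (Ne.symm hμb)
      have hξxp : 0 < ξ x := by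
        rcases eq_or_lt_of_le (hξ0 x) with h|h
        · exact absurd (hdom x h.symm) hμx
        · exact h
      have hξbp : 0 < ξ (x ++ [b]) := by
        rcases eq_or_lt_of_le (hξ0 (x ++ [b])) with h|h
        · exact absurd (hdom _ h.symm) hμb
        · exact h
      rw [condP, condP]
      have harg : (μ (x ++ [b]) / μ x) / (ξ (x ++ [b]) / ξ x) =
          (μ (x ++ [b]) / ξ (x ++ [b])) / (μ x / ξ x) := by
        field_simp
      rw [harg, Real.log_div (by positivity) (by positivity)]
      field_simp

lemma ent_hist (μ ξ : List Bool → ℝ) (hμ0 : ∀ x, 0 ≤ μ x)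
    (hμa : ∀ x, μ x = μ (x ++ [false]) + μ (x ++ [true]))
    (hξ0 : ∀ x, 0 ≤ ξ x) (hdom : ∀ y, ξ y = 0 → μ y = 0) (x : List Bool) :
    μ x * instEnt μ ξ x =
      (∑ b : Bool, μ (x ++ [b]) * Real.log (μ (x ++ [b]) / ξ (x ++ [b]))) -
        μ x * Real.log (μ x / ξ x) := by
  rw [instEnt, Finset.mul_sum]
  rw [Finset.sum_congr rfl (fun b _ => ent_term μ ξ hμ0 hμa hξ0 hdom x b)]
  rw [Finset.sum_sub_distrib, Fintype.sum_bool, Fintype.sum_bool]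
  have h : μ (x ++ [true]) * Real.log (μ x / ξ x) + μ (x ++ [false]) * Real.log (μ x / ξ x)
      = μ x * Real.log (μ x / ξ x) := by
    rw [← add_mul, add_comm, ← hμa x]
  linarith

lemma mass (μ : List Bool → ℝ) (hμe : μ [] = 1)
    (hμa : ∀ x, μ x = μ (x ++ [false]) + μ (x ++ [true])) :
    ∀ t, ∑ x : Fin t → Bool, μ (List.ofFn x) = 1 := by
  intro t
  induction t with
  | zero => simp [hμe]
  | succ t ih =>
    rw [sum_snoc t (fun y => μ y)]
    calc ∑ x : Fin t → Bool, ∑ b : Bool, μ (List.ofFn x ++ [b])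
        = ∑ x : Fin t → Bool, μ (List.ofFn x) := by
          apply Finset.sum_congr rfl
          intro x _
          rw [Fintype.sum_bool, add_comm, ← hμa]
      _ = 1 := ih

lemma totalEnt_eq (μ ξ : List Bool → ℝ) (hμ0 : ∀ x, 0 ≤ μ x) (hμe : μ [] = 1)
    (hμa : ∀ x, μ x = μ (x ++ [false]) + μ (x ++ [true]))
    (hξ0 : ∀ x, 0 ≤ ξ x) (hξe : ξ [] = 1)
    (hdom : ∀ y, ξ y = 0 → μ y = 0) (n : ℕ) :
    totalEnt μ ξ n =
      ∑ y : Fin n → Bool, μ (List.ofFn y) * Real.log (μ (List.ofFn y) / ξ (List.ofFn y)) := by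
  have hF : ∀ t, ∑ x : Fin t → Bool, μ (List.ofFn x) * instEnt μ ξ (List.ofFn x) =
      (∑ y : Fin (t+1) → Bool, μ (List.ofFn y) * Real.log (μ (List.ofFn y) / ξ (List.ofFn y))) -
      (∑ x : Fin t → Bool, μ (List.ofFn x) * Real.log (μ (List.ofFn x) / ξ (List.ofFn x))) := by
    intro t
    rw [sum_snoc t (fun y => μ y * Real.log (μ y / ξ y)), ← Finset.sum_sub_distrib]
    apply Finset.sum_congr rfl
    intro x _
    exact ent_hist μ ξ hμ0 hμa hξ0 hdom (List.ofFn x)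
  rw [totalEnt]
  rw [Finset.sum_congr rfl (fun t _ => hF t)]
  rw [Finset.sum_range_sub (fun t => ∑ x : Fin t → Bool,
    μ (List.ofFn x) * Real.log (μ (List.ofFn x) / ξ (List.ofFn x))) n]
  have h0 : ∑ x : Fin 0 → Bool, μ (List.ofFn x) * Real.log (μ (List.ofFn x) / ξ (List.ofFn x)) = 0 := by
    simp [hμe, hξe]
  rw [h0, sub_zero]

end Tel

/-- Theorem 2, unit loss bound: for every `n ≥ 1`,
`0 ≤ L_{nΛξ} − L_{nΛμ} ≤ H_n + √(4 L_{nΛμ} H_n + H_n²)`, where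
`H_n ≤ ln (1/w_μ)` is the relative entropy between `μ = μs i₀` and `ξ`. -/
theorem unit_loss_bound {ι : Type*} [Countable ι]
    (μs : ι → List Bool → ℝ) (w : ι → ℝ)
    (hμs : ∀ i, IsDistr (μs i)) (hw : ∀ i, 0 < w i) (hw1 : HasSum w 1)
    (ξ : List Bool → ℝ) (hξ : ∀ x, HasSum (fun i => w i * μs i x) (ξ x))
    (i₀ : ι)
    (l : Bool → Bool → ℝ) (hl : ∀ a y, l a y ∈ Set.Icc (0 : ℝ) 1)
    (Yμ Yξ : List Bool → Bool)
    (hYμ : IsPredictor (μs i₀) l Yμ) (hYξ : IsPredictor ξ l Yξ)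
    (n : ℕ) (hn : 1 ≤ n) :
    0 ≤ totalLoss (μs i₀) l Yξ n - totalLoss (μs i₀) l Yμ n ∧
    totalLoss (μs i₀) l Yξ n - totalLoss (μs i₀) l Yμ n ≤
      totalEnt (μs i₀) ξ n +
        Real.sqrt (4 * totalLoss (μs i₀) l Yμ n * totalEnt (μs i₀) ξ n +
          totalEnt (μs i₀) ξ n ^ 2) ∧
    totalEnt (μs i₀) ξ n ≤ Real.log (1 / w i₀) := by
  classical
  obtain ⟨hμ0, hμe, hμa⟩ := hμs i₀
  set μ := μs i₀
  -- ξ facts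
  have hξ0 : ∀ x, 0 ≤ ξ x := fun x =>
    hasSum_le (fun i => mul_nonneg (hw i).le ((hμs i).1 x)) hasSum_zero (hξ x)
  have hξe : ξ [] = 1 := by
    have h : (fun i => w i * μs i []) = w := funext fun i => by rw [(hμs i).2.1, mul_one]
    have h2 := hξ []
    rw [h] at h2
    exact h2.unique hw1
  have hξa : ∀ x, ξ x = ξ (x ++ [false]) + ξ (x ++ [true]) := by
    intro x
    have h := (hξ (x ++ [false])).add (hξ (x ++ [true]))
    have h2 : (fun i => w i * μs i (x ++ [false]) + w i * μs i (x ++ [true])) =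
        fun i => w i * μs i x := funext fun i => by rw [← mul_add, ← (hμs i).2.2 x]
    rw [h2] at h
    exact (hξ x).unique h
  have hwle : ∀ x, w i₀ * μ x ≤ ξ x := fun x =>
    le_hasSum (hξ x) i₀ (fun j _ => mul_nonneg (hw j).le ((hμs j).1 x))
  have hdom : ∀ y, ξ y = 0 → μ y = 0 := by
    intro y hy
    have h1 := hwle y
    have h2 := hμ0 y
    nlinarith [hw i₀]
  have hl' : ∀ a y, 0 ≤ l a y ∧ l a y ≤ 1 := fun a y => ⟨(hl a y).1, (hl a y).2⟩
  -- Part 1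
  have hLdiff : 0 ≤ totalLoss μ l Yξ n - totalLoss μ l Yμ n := by
    rw [totalLoss, totalLoss, ← Finset.sum_sub_distrib]
    apply Finset.sum_nonneg; intro t _
    rw [← Finset.sum_sub_distrib]
    apply Finset.sum_nonneg; intro x _
    rw [← mul_sub]
    exact mul_nonneg (hμ0 _)
      (by linarith [hYμ (List.ofFn x) (Yξ (List.ofFn x))])
  -- nonnegativity facts
  have hH0 : 0 ≤ totalEnt μ ξ n :=
    Finset.sum_nonneg fun t _ => Finset.sum_nonneg fun x _ =>
      mul_nonneg (hμ0 _) (instEnt_nonneg μ ξ hμ0 hμa hξ0 hξa hdom _)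
  have hexp0 : ∀ x y, 0 ≤ expLoss μ l x y := fun x y =>
    Finset.sum_nonneg fun b _ =>
      mul_nonneg (div_nonneg (hμ0 _) (hμ0 _)) (hl' b y).1
  have hLμ0 : 0 ≤ totalLoss μ l Yμ n :=
    Finset.sum_nonneg fun t _ => Finset.sum_nonneg fun x _ =>
      mul_nonneg (hμ0 _) (hexp0 _ _)
  -- Part 2 : Cauchy-Schwarz
  have hCS : totalLoss μ l Yξ n - totalLoss μ l Yμ n ≤
      Real.sqrt (2 * totalEnt μ ξ n) *
        Real.sqrt (totalLoss μ l Yξ n + totalLoss μ l Yμ n) := by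
    set s : Finset ((_ : ℕ) × (Fin _ → Bool)) :=
      (Finset.range n).sigma (fun t => (Finset.univ : Finset (Fin t → Bool))) with hs
    set F : ((_ : ℕ) × (Fin _ → Bool)) → ℝ := fun z =>
      Real.sqrt (2 * (μ (List.ofFn z.2) * instEnt μ ξ (List.ofFn z.2))) with hF
    set G : ((_ : ℕ) × (Fin _ → Bool)) → ℝ := fun z =>
      Real.sqrt (μ (List.ofFn z.2) *
        (expLoss μ l (List.ofFn z.2) (Yξ (List.ofFn z.2)) +
         expLoss μ l (List.ofFn z.2) (Yμ (List.ofFn z.2)))) with hG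
    have hstep1 : totalLoss μ l Yξ n - totalLoss μ l Yμ n =
        ∑ z ∈ s, μ (List.ofFn z.2) *
          (expLoss μ l (List.ofFn z.2) (Yξ (List.ofFn z.2)) -
           expLoss μ l (List.ofFn z.2) (Yμ (List.ofFn z.2))) := by
      rw [hs, Finset.sum_sigma, totalLoss, totalLoss, ← Finset.sum_sub_distrib]
      apply Finset.sum_congr rfl; intro t _
      rw [← Finset.sum_sub_distrib]
      apply Finset.sum_congr rfl; intro x _
      rw [mul_sub]
    have hstep2 : ∀ z ∈ s, μ (List.ofFn z.2) *
          (expLoss μ l (List.ofFn z.2) (Yξ (List.ofFn z.2)) -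
           expLoss μ l (List.ofFn z.2) (Yμ (List.ofFn z.2))) ≤ F z * G z := by
      intro z _
      set x := List.ofFn z.2
      have hsh := step_hist μ ξ l hμ0 hμa hξ0 hξa hdom hl' x (Yξ x) (Yμ x)
        (hYξ x (Yμ x))
      have h1 : μ x * (expLoss μ l x (Yξ x) - expLoss μ l x (Yμ x)) ≤
          μ x * Real.sqrt (2 * instEnt μ ξ x *
            (expLoss μ l x (Yξ x) + expLoss μ l x (Yμ x))) :=
        mul_le_mul_of_nonneg_left hsh (hμ0 x)
      have h2 : F z * G z = μ x * Real.sqrt (2 * instEnt μ ξ x *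
          (expLoss μ l x (Yξ x) + expLoss μ l x (Yμ x))) := by
        have hh1 : (0:ℝ) ≤ 2 * (μ x * instEnt μ ξ x) :=
          mul_nonneg (by norm_num)
            (mul_nonneg (hμ0 _) (instEnt_nonneg μ ξ hμ0 hμa hξ0 hξa hdom _))
        rw [hF, hG]
        rw [← Real.sqrt_mul hh1]
        rw [show 2 * (μ x * instEnt μ ξ x) *
            (μ x * (expLoss μ l x (Yξ x) + expLoss μ l x (Yμ x))) =
            (μ x)^2 * (2 * instEnt μ ξ x *
              (expLoss μ l x (Yξ x) + expLoss μ l x (Yμ x))) from by ring]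
        rw [Real.sqrt_mul (sq_nonneg _), Real.sqrt_sq (hμ0 x)]
      rw [h2]
      exact h1
    have hFG : ∑ z ∈ s, F z * G z ≤
        Real.sqrt (∑ z ∈ s, (F z)^2) * Real.sqrt (∑ z ∈ s, (G z)^2) := by
      have hcs := Finset.sum_mul_sq_le_sq_mul_sq s F G
      calc ∑ z ∈ s, F z * G z ≤ |∑ z ∈ s, F z * G z| := le_abs_self _
        _ = Real.sqrt ((∑ z ∈ s, F z * G z)^2) := (Real.sqrt_sq_eq_abs _).symm
        _ ≤ Real.sqrt ((∑ z ∈ s, (F z)^2) * (∑ z ∈ s, (G z)^2)) :=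
            Real.sqrt_le_sqrt hcs
        _ = _ := Real.sqrt_mul (Finset.sum_nonneg fun z _ => sq_nonneg _) _
    have hFsum : ∑ z ∈ s, (F z)^2 = 2 * totalEnt μ ξ n := by
      rw [hs, Finset.sum_sigma, totalEnt, Finset.mul_sum]
      apply Finset.sum_congr rfl; intro t _
      rw [Finset.mul_sum]
      apply Finset.sum_congr rfl; intro x _
      have hh : 0 ≤ μ (List.ofFn x) * instEnt μ ξ (List.ofFn x) :=
        mul_nonneg (hμ0 _) (instEnt_nonneg μ ξ hμ0 hμa hξ0 hξa hdom _)
      rw [hF, Real.sq_sqrt (by linarith)]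
    have hGsum : ∑ z ∈ s, (G z)^2 =
        totalLoss μ l Yξ n + totalLoss μ l Yμ n := by
      rw [hs, Finset.sum_sigma, totalLoss, totalLoss, ← Finset.sum_add_distrib]
      apply Finset.sum_congr rfl; intro t _
      rw [← Finset.sum_add_distrib]
      apply Finset.sum_congr rfl; intro x _
      rw [hG, Real.sq_sqrt (mul_nonneg (hμ0 _) (add_nonneg (hexp0 _ _) (hexp0 _ _))), mul_add]
    rw [hstep1, ← hFsum, ← hGsum]
    exact le_trans (Finset.sum_le_sum hstep2) hFG
  -- final algebra for part 2
  have hsum0 : 0 ≤ totalLoss μ l Yξ n + totalLoss μ l Yμ n := by linarith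
  have hsq : (totalLoss μ l Yξ n - totalLoss μ l Yμ n)^2 ≤
      2 * totalEnt μ ξ n * (totalLoss μ l Yξ n + totalLoss μ l Yμ n) := by
    have h1 : Real.sqrt (2 * totalEnt μ ξ n) *
        Real.sqrt (totalLoss μ l Yξ n + totalLoss μ l Yμ n) =
        Real.sqrt (2 * totalEnt μ ξ n * (totalLoss μ l Yξ n + totalLoss μ l Yμ n)) :=
      (Real.sqrt_mul (by linarith : (0:ℝ) ≤ 2 * totalEnt μ ξ n) _).symm
    rw [h1] at hCS
    calc (totalLoss μ l Yξ n - totalLoss μ l Yμ n)^2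
        ≤ (Real.sqrt (2 * totalEnt μ ξ n *
            (totalLoss μ l Yξ n + totalLoss μ l Yμ n)))^2 := by
          apply pow_le_pow_left₀ hLdiff hCS
      _ = _ := Real.sq_sqrt (mul_nonneg (by linarith) hsum0)
  have hpart2 : totalLoss μ l Yξ n - totalLoss μ l Yμ n ≤
      totalEnt μ ξ n + Real.sqrt (4 * totalLoss μ l Yμ n * totalEnt μ ξ n +
        totalEnt μ ξ n ^ 2) := by
    have h1 : (totalLoss μ l Yξ n - totalLoss μ l Yμ n - totalEnt μ ξ n)^2 ≤
        4 * totalLoss μ l Yμ n * totalEnt μ ξ n + totalEnt μ ξ n ^ 2 := by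
      nlinarith [hsq]
    have h2 : totalLoss μ l Yξ n - totalLoss μ l Yμ n - totalEnt μ ξ n ≤
        Real.sqrt (4 * totalLoss μ l Yμ n * totalEnt μ ξ n + totalEnt μ ξ n ^ 2) := by
      calc totalLoss μ l Yξ n - totalLoss μ l Yμ n - totalEnt μ ξ n
          ≤ |totalLoss μ l Yξ n - totalLoss μ l Yμ n - totalEnt μ ξ n| := le_abs_self _
        _ = Real.sqrt ((totalLoss μ l Yξ n - totalLoss μ l Yμ n - totalEnt μ ξ n)^2) :=
            (Real.sqrt_sq_eq_abs _).symm
        _ ≤ _ := Real.sqrt_le_sqrt h1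
    linarith
  -- Part 3
  have hpart3 : totalEnt μ ξ n ≤ Real.log (1 / w i₀) := by
    rw [totalEnt_eq μ ξ hμ0 hμe hμa hξ0 hξe hdom n]
    have hterm : ∀ y : Fin n → Bool,
        μ (List.ofFn y) * Real.log (μ (List.ofFn y) / ξ (List.ofFn y)) ≤
        μ (List.ofFn y) * Real.log (1 / w i₀) := by
      intro y
      by_cases hμy : μ (List.ofFn y) = 0
      · simp [hμy]
      · have hμyp : 0 < μ (List.ofFn y) := lt_of_le_of_ne (hμ0 _) (Ne.symm hμy)
        have hξyp : 0 < ξ (List.ofFn y) := by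
          rcases eq_or_lt_of_le (hξ0 (List.ofFn y)) with h|h
          · exact absurd (hdom _ h.symm) hμy
          · exact h
        apply mul_le_mul_of_nonneg_left _ (hμ0 _)
        apply Real.log_le_log (by positivity)
        rw [div_le_div_iff₀ hξyp (hw i₀)]
        have := hwle (List.ofFn y)
        nlinarith
    calc ∑ y : Fin n → Bool, μ (List.ofFn y) * Real.log (μ (List.ofFn y) / ξ (List.ofFn y))
        ≤ ∑ y : Fin n → Bool, μ (List.ofFn y) * Real.log (1 / w i₀) :=
          Finset.sum_le_sum fun y _ => hterm y
      _ = Real.log (1 / w i₀) := by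
          rw [← Finset.sum_mul, mass μ hμe hμa n, one_mul]
  exact ⟨hLdiff, hpart2, hpart3⟩
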